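/- Let H = e^{itH} generate the one-parameter automorphism group α_t(g) = e^{itH} g e^{-itH} of U₂(H) for a selfadjoint operator H on a complex Hilbert space. Then the following are equivalent: (a) H is diagonalizable; (b) α leaves some maximal abelian subalgebra t ⊆ u₂(H) invariant; (c) α fixes some maximal abelian subalgebra t ⊆ u₂(H) pointwise. -/

import Mathlib

/-- `x` is a member of the maximal abelian subalgebra `t_c ⊆ u₂(H)` determined by an
orthonormal (Hilbert) basis `c`: `x` is skew-adjoint, Hilbert–Schmidt, and diagonal with
respect to `c`. -/
def diagSkewHS {H : Type} [NormedAddCommGroup H] [InnerProductSpace ℂ H] [CompleteSpace H]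
    {I : Type} (c : HilbertBasis I ℂ H) (x : H →L[ℂ] H) : Prop :=
  ContinuousLinearMap.adjoint x = -x ∧ Summable (fun i => ‖x (c i)‖ ^ 2) ∧
    ∀ i, ∃ μ : ℂ, x (c i) = μ • c i

open intervalIntegral in
lemma char_exists (g : ℝ → ℂ) (hc : Continuous g) (h0 : g 0 = 1)
    (hmul : ∀ s t, g (s + t) = g s * g t) (hnorm : ∀ t, ‖g t‖ = 1) :
    ∃ lam : ℝ, ∀ t : ℝ, g t = Complex.exp (Complex.I * t * lam) := by
  -- Step 1: find a > 0 with nonvanishing integral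
  obtain ⟨a, ha, hre⟩ : ∃ a > (0:ℝ), ∀ s ∈ Set.Icc (0:ℝ) a, (1/2 : ℝ) ≤ (g s).re := by
    have : ContinuousAt g 0 := hc.continuousAt
    rw [Metric.continuousAt_iff] at this
    obtain ⟨δ, hδ, hδ'⟩ := this (1/2) (by norm_num)
    refine ⟨δ/2, by positivity, fun s hs => ?_⟩
    have hd : dist s 0 < δ := by
      simp only [Real.dist_eq, sub_zero]
      rw [abs_of_nonneg hs.1]; linarith [hs.2]
    have h5 := hδ' hd
    rw [h0] at h5
    have h1 : |(g s - 1).re| ≤ ‖g s - 1‖ := by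
      exact Complex.abs_re_le_norm _
    have h2 : ‖g s - 1‖ < 1/2 := by simpa [Complex.dist_eq] using h5
    have h6 : (g s - 1).re = (g s).re - 1 := by simp
    rw [h6] at h1
    have := abs_le.mp h1
    linarith [this.1]
  set c : ℂ := ∫ s in (0:ℝ)..a, g s with hc_def
  have hcne : c ≠ 0 := by
    intro h
    have hint : ∫ s in (0:ℝ)..a, (g s).re = c.re := by
      rw [hc_def, integral_of_le ha.le, integral_of_le ha.le]
      have := integral_re (μ := MeasureTheory.volume.restrict (Set.Ioc 0 a)) (f := g)
        (hc.integrableOn_Ioc)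
      simpa [RCLike.re_to_complex] using this
    have hmono : a/2 ≤ ∫ s in (0:ℝ)..a, (g s).re := by
      have := intervalIntegral.integral_mono_on (μ := MeasureTheory.volume)
        ha.le (_root_.intervalIntegrable_const (c := (1/2:ℝ)))
        ((Complex.continuous_re.comp hc).intervalIntegrable 0 a) hre
      simpa [div_eq_mul_inv] using this
    rw [hint, h] at hmono
    simp at hmono; linarith
  -- Step 2: FTC
  set G : ℝ → ℂ := fun t => ∫ s in (0:ℝ)..t, g s with hG_def
  have hG : ∀ t, HasDerivAt G (g t) t := fun t =>
    integral_hasDerivAt_right (hc.intervalIntegrable 0 t)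
      (hc.stronglyMeasurableAtFilter _ _) hc.continuousAt
  -- Step 3: g t = (G (t+a) - G t) * c⁻¹
  have key : ∀ t, g t = (G (t + a) - G t) * c⁻¹ := by
    intro t
    have h1 : g t * c = ∫ s in (0:ℝ)..a, g (t + s) := by
      rw [hc_def, ← integral_const_mul]
      congr 1; funext s; rw [hmul]
    have h2 : (∫ s in (0:ℝ)..a, g (t + s)) = ∫ s in t..(t+a), g s := by
      simpa using integral_comp_add_left (a := (0:ℝ)) (b := a) g t
    have h3 : G t + ∫ s in t..(t+a), g s = G (t + a) :=
      integral_add_adjacent_intervals (hc.intervalIntegrable 0 t) (hc.intervalIntegrable t (t+a))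
    have h4 : g t * c = G (t + a) - G t := by rw [h1, h2]; linear_combination h3
    rw [← h4, mul_assoc, mul_inv_cancel₀ hcne, mul_one]
  set d : ℂ := (g a - 1) * c⁻¹ with hd_def
  have hder : ∀ t, HasDerivAt g (d * g t) t := by
    intro t
    have h1 : HasDerivAt (fun u : ℝ => G (u + a)) (g (t + a)) t := by
      simpa using (hG (t + a)).comp_add_const
    have h2 : HasDerivAt (fun u : ℝ => (G (u + a) - G u) * c⁻¹)
        ((g (t + a) - g t) * c⁻¹) t := (h1.sub (hG t)).mul_const _
    have h3 : (fun u : ℝ => (G (u + a) - G u) * c⁻¹) = g := by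
      funext u; exact (key u).symm
    rw [h3] at h2
    convert h2 using 1
    rw [hmul, hd_def]; ring
  -- Step 4: solve the ODE
  have hexp : ∀ t : ℝ, g t = Complex.exp (d * t) := by
    have hh : ∀ t : ℝ, HasDerivAt (fun u : ℝ => Complex.exp (-(d * u)) * g u) 0 t := by
      intro t
      have e1 : HasDerivAt (fun u : ℝ => -(d * (u:ℂ))) (-d) t := by
        have : HasDerivAt (fun u : ℝ => (u:ℂ)) 1 t := Complex.ofRealCLM.hasDerivAt
        have h' := (this.const_mul d).neg; simp only [mul_one] at h'; exact h'
      have e2 : HasDerivAt (fun u : ℝ => Complex.exp (-(d * u)))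
          (Complex.exp (-(d * t)) * (-d)) t := e1.cexp
      have e3 := e2.mul (hder t)
      convert e3 using 1
      · rfl
      · rfl
      · ring
    intro t
    have hconst := is_const_of_deriv_eq_zero (𝕜 := ℝ)
      (f := fun u : ℝ => Complex.exp (-(d * u)) * g u)
      (fun u => (hh u).differentiableAt) (fun u => (hh u).deriv) t 0
    simp only [Complex.ofReal_zero, mul_zero, neg_zero, Complex.exp_zero, one_mul, h0] at hconst
    have := congrArg (· * Complex.exp (d * t)) hconst
    simp only [one_mul] at this
    rw [mul_comm, ← mul_assoc, ← Complex.exp_add] at this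
    simpa using this
  -- Step 5: d is purely imaginary
  have hdre : d.re = 0 := by
    have h1 := hnorm 1
    rw [hexp 1, Complex.norm_exp] at h1
    have : (d * (1:ℝ)).re = d.re := by simp
    rw [this] at h1
    have h2 : Real.exp d.re = Real.exp 0 := by rw [h1, Real.exp_zero]
    exact Real.exp_eq_exp.mp h2
  refine ⟨d.im, fun t => ?_⟩
  rw [hexp t]
  congr 1
  apply Complex.ext <;>
    simp [Complex.mul_re, Complex.mul_im, hdre] <;> ring

open scoped InnerProductSpace

variable {H : Type} [NormedAddCommGroup H] [InnerProductSpace ℂ H] [CompleteSpace H]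

lemma hb_ext {I : Type} (b : HilbertBasis I ℂ H) {f g : H →L[ℂ] H}
    (h : ∀ i, f (b i) = g (b i)) : f = g := by
  apply ContinuousLinearMap.ext_on (s := Set.range (b : I → H))
  · rw [Submodule.dense_iff_topologicalClosure_eq_top]
    exact b.dense_span
  · rintro _ ⟨i, rfl⟩; exact h i

lemma hb_eq_zero {I : Type} (b : HilbertBasis I ℂ H) {w : H}
    (h : ∀ i, ⟪b i, w⟫_ℂ = 0) : w = 0 := by
  have h0 : b.repr w = 0 := by
    ext i
    simpa [b.repr_apply_apply] using h i
  calc w = b.repr.symm (b.repr w) := (b.repr.symm_apply_apply w).symm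
    _ = 0 := by rw [h0]; simp

noncomputable def rk1 (u : H) : H →L[ℂ] H := Complex.I • ((innerSL ℂ u).smulRight u)

lemma rk1_apply (u v : H) : rk1 u v = (Complex.I * ⟪u, v⟫_ℂ) • u := by
  simp [rk1, ContinuousLinearMap.smulRight_apply, smul_smul]

lemma rk1_skew (u : H) : ContinuousLinearMap.adjoint (rk1 u) = -(rk1 u) := by
  symm
  rw [ContinuousLinearMap.eq_adjoint_iff]
  intro v w
  simp only [ContinuousLinearMap.neg_apply, rk1_apply, inner_neg_left, inner_smul_left,
    inner_smul_right, map_mul, Complex.conj_I, inner_conj_symm]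
  ring

lemma rk1_diag {I : Type} [DecidableEq I] (c : HilbertBasis I ℂ H) (j : I) :
    diagSkewHS c (rk1 (c j)) := by
  have hon := orthonormal_iff_ite.mp c.orthonormal
  refine ⟨rk1_skew _, ?_, ?_⟩
  · apply summable_of_ne_finset_zero (s := {j})
    intro i hi
    simp only [Finset.mem_singleton] at hi
    rw [rk1_apply, hon j i, if_neg (fun h => hi (h.symm))]
    simp
  · intro i
    by_cases h : j = i
    · subst h
      exact ⟨Complex.I, by rw [rk1_apply, hon j j]; simp⟩
    · exact ⟨0, by rw [rk1_apply, hon j i, if_neg h]; simp⟩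

lemma unitary_norm {u : H →L[ℂ] H} (hu : u ∈ unitary (H →L[ℂ] H)) (v : H) :
    ‖u v‖ = ‖v‖ := by
  have h1 : star u * u = 1 := (Unitary.mem_iff.mp hu).1
  have h2 : ⟪u v, u v⟫_ℂ = ⟪v, v⟫_ℂ := by
    have h3 := ContinuousLinearMap.adjoint_inner_left (𝕜 := ℂ) u v (u v)
    rw [← ContinuousLinearMap.star_eq_adjoint] at h3
    have h4 : star u (u v) = v := by
      rw [← ContinuousLinearMap.mul_apply, h1, ContinuousLinearMap.one_apply]
    rw [h4] at h3
    exact h3.symm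
  rw [@norm_eq_sqrt_re_inner ℂ, @norm_eq_sqrt_re_inner ℂ (x := v), h2]

lemma star_U_eq {U : ℝ → (H →L[ℂ] H)} (hUu : ∀ t, U t ∈ unitary (H →L[ℂ] H))
    (hU0 : U 0 = 1) (hUadd : ∀ s t, U (s + t) = U s * U t) (t : ℝ) :
    star (U t) = U (-t) := by
  have h2 : U t * U (-t) = 1 := by rw [← hUadd]; simp [hU0]
  have h1 : star (U t) * U t = 1 := (Unitary.mem_iff.mp (hUu t)).1
  calc star (U t) = star (U t) * (U t * U (-t)) := by rw [h2, mul_one]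
    _ = (star (U t) * U t) * U (-t) := by rw [mul_assoc]
    _ = U (-t) := by rw [h1, one_mul]

/-- (a) implies (c). -/
lemma a_to_c {U : ℝ → (H →L[ℂ] H)} (hUu : ∀ t, U t ∈ unitary (H →L[ℂ] H))
    (hU0 : U 0 = 1) (hUadd : ∀ s t, U (s + t) = U s * U t)
    {I : Type} (b : HilbertBasis I ℂ H) (lam : I → ℝ)
    (hU : ∀ (t : ℝ) (i : I), U t (b i) = Complex.exp (Complex.I * t * lam i) • b i)
    (t : ℝ) (x : H →L[ℂ] H) (hx : diagSkewHS b x) : U t * x * star (U t) = x := by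
  apply hb_ext b
  intro i
  obtain ⟨μ, hμ⟩ := hx.2.2 i
  have he : Complex.exp (Complex.I * (-t) * lam i) * Complex.exp (Complex.I * t * lam i) = 1 := by
    rw [← Complex.exp_add, ← Complex.exp_zero]
    congr 1
    push_cast; ring
  rw [ContinuousLinearMap.mul_apply, ContinuousLinearMap.mul_apply,
    star_U_eq hUu hU0 hUadd, hU (-t) i, map_smul, hμ, map_smul, map_smul, hU t i,
    smul_smul, smul_smul]
  congr 1
  push_cast at he ⊢
  linear_combination μ * he

/-- (b) implies (a): if conjugation preserves the diagonal subalgebra, the `U t` are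
simultaneously diagonal, with exponential eigenvalue functions. -/
lemma b_to_a {U : ℝ → (H →L[ℂ] H)} (hUu : ∀ t, U t ∈ unitary (H →L[ℂ] H))
    (hU0 : U 0 = 1) (hUadd : ∀ s t, U (s + t) = U s * U t)
    (hUcont : ∀ v : H, Continuous fun t => U t v)
    {I : Type} (c : HilbertBasis I ℂ H)
    (hb : ∀ (t : ℝ) (x : H →L[ℂ] H), diagSkewHS c x → diagSkewHS c (U t * x * star (U t))) :
    ∃ lam : I → ℝ, ∀ (t : ℝ) (i : I), U t (c i) = Complex.exp (Complex.I * t * lam i) • c i := by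
  classical
  have hon := orthonormal_iff_ite.mp c.orthonormal
  have hnorm1 : ∀ i, ‖c i‖ = 1 := c.orthonormal.1
  -- step 1: each U t is diagonal
  have eig : ∀ (j : I) (t : ℝ), U t (c j) = (⟪c j, U t (c j)⟫_ℂ) • c j := by
    intro j
    set f : ℝ → ℂ := fun t => ⟪c j, U t (c j)⟫_ℂ with hf_def
    have hfc : Continuous f := Continuous.inner continuous_const (hUcont (c j))
    -- dichotomy for each t
    have dich : ∀ t : ℝ, (∃ ν : ℂ, ‖ν‖ = 1 ∧ U t (c j) = ν • c j) ∨ f t = 0 := by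
      intro t
      set w : H := U t (c j) with hw_def
      have hw1 : ‖w‖ = 1 := by rw [hw_def, unitary_norm (hUu t)]; exact hnorm1 j
      have hy := (hb t (rk1 (c j)) (rk1_diag c j)).2.2
      have hyval : ∀ i, (U t * rk1 (c j) * star (U t)) (c i)
          = (Complex.I * ⟪w, c i⟫_ℂ) • w := by
        intro i
        rw [ContinuousLinearMap.mul_apply, ContinuousLinearMap.mul_apply, rk1_apply,
          ContinuousLinearMap.star_eq_adjoint, ContinuousLinearMap.adjoint_inner_right,
          map_smul]
      -- find an index where w has a component
      have hex : ∃ i, ⟪w, c i⟫_ℂ ≠ 0 := by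
        by_contra hcon
        push_neg at hcon
        have : w = 0 := hb_eq_zero c (fun i => by
          rw [← inner_conj_symm, hcon i, map_zero])
        rw [this, norm_zero] at hw1
        norm_num at hw1
      obtain ⟨i, hi⟩ := hex
      obtain ⟨μ, hμ⟩ := hy i
      rw [hyval i] at hμ
      have hIne : Complex.I * ⟪w, c i⟫_ℂ ≠ 0 := mul_ne_zero Complex.I_ne_zero hi
      have hw : w = ((Complex.I * ⟪w, c i⟫_ℂ)⁻¹ * μ) • c i := by
        have h2 := congrArg (fun z => (Complex.I * ⟪w, c i⟫_ℂ)⁻¹ • z) hμ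
        simp only [smul_smul] at h2
        rw [inv_mul_cancel₀ hIne, one_smul] at h2
        exact h2
      set ν : ℂ := (Complex.I * ⟪w, c i⟫_ℂ)⁻¹ * μ with hν_def
      have hνnorm : ‖ν‖ = 1 := by
        have : ‖w‖ = ‖ν‖ * ‖c i‖ := by rw [hw, norm_smul]
        rw [hw1, hnorm1 i, mul_one] at this
        exact this.symm
      by_cases hij : i = j
      · subst hij
        exact Or.inl ⟨ν, hνnorm, hw⟩
      · right
        rw [hf_def]
        simp only [← hw_def, hw, inner_smul_right, hon j i, if_neg (Ne.symm hij)]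
        simp
    -- the eigen-set is clopen
    have hf0 : f 0 = 1 := by
      rw [hf_def]; simp only [hU0, ContinuousLinearMap.one_apply, hon j j, eq_self_iff_true, if_true]
    have hSuniv : {t : ℝ | 1/2 ≤ ‖f t‖} = Set.univ := by
      have hopen : {t : ℝ | 1/2 ≤ ‖f t‖} = {t : ℝ | 1/2 < ‖f t‖} := by
        ext t
        simp only [Set.mem_setOf_eq]
        constructor
        · intro h
          rcases dich t with ⟨ν, hν1, hν2⟩ | h0
          · have : f t = ν := by
              rw [hf_def]; simp only [hν2, inner_smul_right, hon j j, eq_self_iff_true, if_true, mul_one]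
            rw [this, hν1]; norm_num
          · rw [h0] at h; norm_num at h
        · exact le_of_lt
      have : IsClopen {t : ℝ | 1/2 ≤ ‖f t‖} := by
        constructor
        · exact isClosed_le continuous_const hfc.norm
        · rw [hopen]
          exact isOpen_lt continuous_const hfc.norm
      rcases isClopen_iff.mp this with h | h
      · exfalso
        have : (0:ℝ) ∈ {t : ℝ | 1/2 ≤ ‖f t‖} := by
          simp only [Set.mem_setOf_eq, hf0]; norm_num
        rw [h] at this; exact this
      · exact h
    intro t
    have ht : (1:ℝ)/2 ≤ ‖f t‖ := by
      have : t ∈ {t : ℝ | 1/2 ≤ ‖f t‖} := by rw [hSuniv]; trivial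
      exact this
    rcases dich t with ⟨ν, hν1, hν2⟩ | h0
    · rw [hν2, inner_smul_right]
      simp [hon j j, hnorm1 j]
    · rw [h0] at ht; norm_num at ht
  -- step 2: the eigenvalue functions are continuous characters
  have char : ∀ j : I, ∃ l : ℝ, ∀ t : ℝ,
      ⟪c j, U t (c j)⟫_ℂ = Complex.exp (Complex.I * t * l) := by
    intro j
    apply char_exists
    · exact Continuous.inner continuous_const (hUcont (c j))
    · simp only [hU0, ContinuousLinearMap.one_apply, hon j j, eq_self_iff_true, if_true]
    · intro s t
      have h1 : U (s + t) (c j) = (⟪c j, U t (c j)⟫_ℂ * ⟪c j, U s (c j)⟫_ℂ) • c j := by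
        rw [hUadd, ContinuousLinearMap.mul_apply]
        conv_lhs => rw [eig j t]
        rw [map_smul]
        conv_lhs => rw [eig j s]
        rw [smul_smul]
      rw [h1, inner_smul_right]
      simp only [hon j j, eq_self_iff_true, if_true, mul_one]
      ring
    · intro t
      have h1 : ‖U t (c j)‖ = 1 := by rw [unitary_norm (hUu t)]; exact hnorm1 j
      rw [eig j t, norm_smul, hnorm1 j, mul_one] at h1
      exact h1
  choose lam hlam using char
  exact ⟨lam, fun t i => by rw [eig i t, hlam i t]⟩

/-- For a strongly continuous unitary one-parameter group `(U_t) = (e^{itH})` and the induced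
automorphisms `α_t(g) = U_t g U_t⁻¹` of `u₂(H)`, the following are equivalent:
(a) `H` is diagonalizable (there is a Hilbert basis of common eigenvectors of the `U_t`);
(b) `α` leaves some maximal abelian subalgebra `t ⊆ u₂(H)` invariant;
(c) `α` fixes some maximal abelian subalgebra `t ⊆ u₂(H)` pointwise. -/
theorem stmt_12 {H : Type} [NormedAddCommGroup H] [InnerProductSpace ℂ H] [CompleteSpace H]
    (U : ℝ → (H →L[ℂ] H))
    (hUu : ∀ t, U t ∈ unitary (H →L[ℂ] H))
    (hU0 : U 0 = 1) (hUadd : ∀ s t, U (s + t) = U s * U t)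
    (hUcont : ∀ v : H, Continuous fun t => U t v) :
    ((∃ (I : Type) (b : HilbertBasis I ℂ H) (lam : I → ℝ),
        ∀ (t : ℝ) (i : I), U t (b i) = Complex.exp (Complex.I * t * lam i) • b i)
      ↔ (∃ (I : Type) (c : HilbertBasis I ℂ H),
          ∀ (t : ℝ) (x : H →L[ℂ] H), diagSkewHS c x → diagSkewHS c (U t * x * star (U t))))
    ∧ ((∃ (I : Type) (c : HilbertBasis I ℂ H),
          ∀ (t : ℝ) (x : H →L[ℂ] H), diagSkewHS c x → diagSkewHS c (U t * x * star (U t)))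
      ↔ (∃ (I : Type) (c : HilbertBasis I ℂ H),
          ∀ (t : ℝ) (x : H →L[ℂ] H), diagSkewHS c x → U t * x * star (U t) = x)) := by
  refine ⟨⟨?_, ?_⟩, ?_, ?_⟩
  · rintro ⟨I, b, lam, hU⟩
    exact ⟨I, b, fun t x hx => by rw [a_to_c hUu hU0 hUadd b lam hU t x hx]; exact hx⟩
  · rintro ⟨I, c, hbinv⟩
    obtain ⟨lam, hlam⟩ := b_to_a hUu hU0 hUadd hUcont c hbinv
    exact ⟨I, c, lam, hlam⟩
  · rintro ⟨I, c, hbinv⟩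
    obtain ⟨lam, hlam⟩ := b_to_a hUu hU0 hUadd hUcont c hbinv
    exact ⟨I, c, fun t x hx => a_to_c hUu hU0 hUadd c lam hlam t x hx⟩
  · rintro ⟨I, c, hfix⟩
    exact ⟨I, c, fun t x hx => by rw [hfix t x hx]; exact hx⟩
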